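/- For every m ∈ ℤ^p \ {0}, viewing m as a vector of ℂ^p and writing m = m_- + m_+ with m_- = Π_-(m) ∈ E_- and m_+ = Π_+(m) ∈ E_+, one has m_- ≠ 0 and m_+ ≠ 0; equivalently, no nonzero integer vector lies in the stable subspace E_- or in the unstable subspace E_+. -/

import Mathlib

/-- The stable subspace of an endomorphism: the sum of the generalized eigenspaces
for eigenvalues of modulus `< 1`. -/
noncomputable def stableSubspace {M : Type*} [AddCommGroup M] [Module ℂ M]
    (f : Module.End ℂ M) : Submodule ℂ M :=
  ⨆ (μ : ℂ) (_ : ‖μ‖ < 1), f.maxGenEigenspace μ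

/-- The unstable subspace of an endomorphism: the sum of the generalized eigenspaces
for eigenvalues of modulus `> 1`. -/
noncomputable def unstableSubspace {M : Type*} [AddCommGroup M] [Module ℂ M]
    (f : Module.End ℂ M) : Submodule ℂ M :=
  ⨆ (μ : ℂ) (_ : 1 < ‖μ‖), f.maxGenEigenspace μ

open Filter Topology Finset Matrix

lemma map_int_mul {p : ℕ} (X Y : Matrix (Fin p) (Fin p) ℤ) :
    (X * Y).map (Int.cast : ℤ → ℂ) = X.map (Int.cast : ℤ → ℂ) * Y.map (Int.cast : ℤ → ℂ) := by
  ext i j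
  simp only [Matrix.map_apply, Matrix.mul_apply]
  push_cast
  rfl

/-- Powers of `f` applied to a generalized eigenvector with eigenvalue of modulus `< 1`
tend to zero. -/
lemma aux_tendsto {p : ℕ} (f : Module.End ℂ (Fin p → ℂ)) (μ : ℂ) (hμ : ‖μ‖ < 1)
    (v : Fin p → ℂ) (hv : v ∈ f.maxGenEigenspace μ) :
    Tendsto (fun n => (f ^ n) v) atTop (𝓝 0) := by
  obtain ⟨K, hK⟩ := (Module.End.mem_maxGenEigenspace f μ v).mp hv
  set N : Module.End ℂ (Fin p → ℂ) := f - μ • 1 with hN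
  have hNk : ∀ k, K ≤ k → (N ^ k) v = 0 := by
    intro k hk
    rw [← Nat.sub_add_cancel hk, pow_add, Module.End.mul_apply, hK, map_zero]
  have expand : ∀ n, (f ^ n) v
      = ∑ k ∈ Finset.range (n + 1), (n.choose k : ℂ) • μ ^ (n - k) • (N ^ k) v := by
    intro n
    have hf : f = N + μ • 1 := by rw [hN]; abel
    have hc : Commute N (μ • (1 : Module.End ℂ (Fin p → ℂ))) :=
      (Commute.one_right N).smul_right μ
    rw [hf, hc.add_pow]
    simp only [LinearMap.coe_sum, Finset.sum_apply]
    refine Finset.sum_congr rfl fun k _ => ?_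
    have h1 : (μ • (1 : Module.End ℂ (Fin p → ℂ))) ^ (n - k) = μ ^ (n - k) • 1 := by
      rw [smul_pow, one_pow]
    rw [h1]
    simp only [Module.End.mul_apply, Module.End.natCast_apply, LinearMap.smul_apply,
      Module.End.one_apply, _root_.map_smul, map_nsmul, Nat.cast_smul_eq_nsmul]
  -- the bounding sum
  set c : ℕ → ℝ := fun k => ‖(N ^ k) v‖ with hc
  set t : ℕ → ℕ → ℝ := fun k n => (n.choose k : ℝ) * (‖μ‖) ^ (n - k) * c k with ht
  have habs : ∀ z : ℂ, ‖z‖ = ‖z‖ := fun z => rfl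
  -- each t k tends to zero
  have htk : ∀ k, Tendsto (fun n => t k n) atTop (𝓝 0) := by
    intro k
    set r : ℝ := (‖μ‖ + 1) / 2 with hr
    have h0 : 0 ≤ ‖μ‖ := norm_nonneg _
    have hr0 : 0 < r := by positivity
    have hr1 : r < 1 := by rw [hr]; linarith
    have hμr : ‖μ‖ ≤ r := by rw [hr]; linarith
    have hsum : Tendsto (fun n : ℕ => (n : ℝ) ^ k * r ^ n) atTop (𝓝 0) := by
      have : Summable (fun n : ℕ => (n : ℝ) ^ k * r ^ n) :=
        summable_pow_mul_geometric_of_norm_lt_one k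
          (by rw [Real.norm_eq_abs, abs_of_pos hr0]; exact hr1)
      exact this.tendsto_atTop_zero
    have hg : Tendsto (fun n : ℕ => (c k / r ^ k) * ((n : ℝ) ^ k * r ^ n)) atTop (𝓝 0) := by
      simpa using hsum.const_mul (c k / r ^ k)
    refine squeeze_zero' ?_ ?_ hg
    · filter_upwards with n
      have : 0 ≤ c k := norm_nonneg _
      positivity
    · filter_upwards [eventually_ge_atTop k] with n hn
      have h1 : (n.choose k : ℝ) ≤ (n : ℝ) ^ k := by
        exact_mod_cast Nat.choose_le_pow n k
      have h2 : (‖μ‖) ^ (n - k) ≤ r ^ (n - k) := by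
        exact pow_le_pow_left₀ h0 hμr _
      have h3 : r ^ (n - k) = r ^ n / r ^ k := by
        rw [pow_sub₀ r (ne_of_gt hr0) hn]
        rw [div_eq_mul_inv]
      have hck : 0 ≤ c k := norm_nonneg _
      calc t k n = (n.choose k : ℝ) * (‖μ‖) ^ (n - k) * c k := by
            simp only [ht]
        _ ≤ (n : ℝ) ^ k * (r ^ (n - k)) * c k :=
            mul_le_mul (mul_le_mul h1 h2 (by positivity) (by positivity)) le_rfl hck
              (by positivity)
        _ = (c k / r ^ k) * ((n : ℝ) ^ k * r ^ n) := by
            rw [h3]; field_simp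
  -- overall bound
  have hbound : ∀ᶠ n in atTop, ‖(f ^ n) v‖ ≤ ∑ k ∈ Finset.range K, t k n := by
    filter_upwards [eventually_ge_atTop K] with n hn
    have hsub : (f ^ n) v = ∑ k ∈ Finset.range K, (n.choose k : ℂ) • μ ^ (n - k) • (N ^ k) v := by
      rw [expand n]
      refine (Finset.sum_subset (Finset.range_subset_range.mpr (by omega)) ?_).symm
      intro k _ hk
      rw [Finset.mem_range, not_lt] at hk
      rw [hNk k hk, smul_zero, smul_zero]
    rw [hsub]
    refine le_trans (norm_sum_le _ _) (le_of_eq ?_)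
    refine Finset.sum_congr rfl fun k _ => ?_
    simp only [ht, hc]
    rw [norm_smul, norm_smul, norm_pow, Complex.norm_natCast]
    ring
  have hS : Tendsto (fun n => ∑ k ∈ Finset.range K, t k n) atTop (𝓝 0) := by
    have := tendsto_finset_sum (Finset.range K) (fun k _ => htk k)
    simpa using this
  exact squeeze_zero_norm' hbound hS

/-- Powers of `f` applied to any vector of the stable subspace tend to zero. -/
lemma stable_tendsto {p : ℕ} (f : Module.End ℂ (Fin p → ℂ)) (v : Fin p → ℂ)
    (hv : v ∈ stableSubspace f) :
    Tendsto (fun n => (f ^ n) v) atTop (𝓝 0) := by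
  refine Submodule.iSup_induction (motive := fun w => Tendsto (fun n => (f ^ n) w) atTop (𝓝 0))
    (fun μ : ℂ => ⨆ (_ : ‖μ‖ < 1), f.maxGenEigenspace μ) hv ?_ ?_ ?_
  · intro μ x hx
    by_cases h : ‖μ‖ < 1
    · simp only [iSup_pos h] at hx
      exact aux_tendsto f μ h x hx
    · simp only [iSup_neg h] at hx
      rw [Submodule.mem_bot] at hx
      subst hx
      simpa using tendsto_const_nhds (α := Fin p → ℂ) (x := 0) (f := atTop (α := ℕ))
  · simpa using tendsto_const_nhds (α := Fin p → ℂ) (x := 0) (f := atTop (α := ℕ))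
  · intro x y hx hy
    have := hx.add hy
    simpa using this

/-- Key lemma: a nonzero integer vector cannot lie in the stable subspace of an
integer matrix which is invertible over `ℤ`. -/
lemma key_lemma {p : ℕ} (C A : Matrix (Fin p) (Fin p) ℤ) (hAC : A * C = 1)
    (m : Fin p → ℤ) (hm : m ≠ 0)
    (hmem : (fun i => (m i : ℂ)) ∈ stableSubspace (Matrix.toLin' (C.map (Int.cast : ℤ → ℂ)))) :
    False := by
  have htend := stable_tendsto _ _ hmem
  have hpow : ∀ n, ((Matrix.toLin' (C.map (Int.cast : ℤ → ℂ))) ^ n) (fun i => (m i : ℂ))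
      = fun i => ((((C ^ n) *ᵥ m) i : ℤ) : ℂ) := by
    intro n
    induction n with
    | zero => simp [Matrix.one_mulVec]
    | succ n ih =>
      rw [pow_succ', Module.End.mul_apply, ih, Matrix.toLin'_apply]
      have h2 : (C ^ (n + 1)) *ᵥ m = C *ᵥ ((C ^ n) *ᵥ m) := by
        rw [Matrix.mulVec_mulVec, ← pow_succ']
      funext i
      rw [h2]
      simp only [Matrix.mulVec, dotProduct, Matrix.map_apply]
      push_cast
      rfl
  have hACn : ∀ n, A ^ n * C ^ n = 1 := by
    intro n
    induction n with
    | zero => simp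
    | succ n ih =>
      rw [pow_succ, pow_succ']
      calc A ^ n * A * (C * C ^ n) = A ^ n * (A * C) * C ^ n := by
            simp [Matrix.mul_assoc]
        _ = 1 := by rw [hAC, Matrix.mul_one, ih]
  have hne : ∀ n, (C ^ n) *ᵥ m ≠ 0 := by
    intro n h
    apply hm
    have : (A ^ n) *ᵥ ((C ^ n) *ᵥ m) = 0 := by rw [h, Matrix.mulVec_zero]
    rwa [Matrix.mulVec_mulVec, hACn n, Matrix.one_mulVec] at this
  have hge : ∀ n, (1 : ℝ) ≤ ‖((Matrix.toLin' (C.map (Int.cast : ℤ → ℂ))) ^ n)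
      (fun i => (m i : ℂ))‖ := by
    intro n
    obtain ⟨i, hi⟩ : ∃ i, ((C ^ n) *ᵥ m) i ≠ 0 := by
      by_contra h
      push_neg at h
      exact hne n (funext h)
    have h1 : (1 : ℝ) ≤ ‖((((C ^ n) *ᵥ m) i : ℤ) : ℂ)‖ := by
      rw [Complex.norm_intCast]
      exact_mod_cast Int.one_le_abs hi
    calc (1 : ℝ) ≤ ‖((((C ^ n) *ᵥ m) i : ℤ) : ℂ)‖ := h1
      _ ≤ ‖fun i => ((((C ^ n) *ᵥ m) i : ℤ) : ℂ)‖ :=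
          norm_le_pi_norm (f := fun j => ((((C ^ n) *ᵥ m) j : ℤ) : ℂ)) i
      _ = _ := by rw [hpow n]
  have hlt : ∀ᶠ n in atTop, ‖((Matrix.toLin' (C.map (Int.cast : ℤ → ℂ))) ^ n)
      (fun i => (m i : ℂ))‖ < 1 := by
    have hnorm : Tendsto (fun n => ‖((Matrix.toLin' (C.map (Int.cast : ℤ → ℂ))) ^ n)
        (fun i => (m i : ℂ))‖) atTop (𝓝 0) := by
      simpa using htend.norm
    exact hnorm.eventually (gt_mem_nhds one_pos)
  obtain ⟨n, hn⟩ := hlt.exists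
  exact absurd (hge n) (not_le.mpr hn)

/-- The unstable subspace of `f` is contained in the stable subspace of its inverse. -/
lemma unstable_le_stable_inv {M : Type*} [AddCommGroup M] [Module ℂ M]
    (f g : Module.End ℂ M) (hfg : f * g = 1) (hgf : g * f = 1) :
    unstableSubspace f ≤ stableSubspace g := by
  refine iSup₂_le fun μ hμ => ?_
  have hμ0 : μ ≠ 0 := by
    intro h
    rw [h] at hμ
    simp only [norm_zero] at hμ
    norm_num at hμ
  have habs : ‖μ⁻¹‖ < 1 := by
    rw [norm_inv]
    rw [inv_lt_one_iff₀]
    right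
    exact hμ
  refine le_trans ?_ (le_iSup₂ (f := fun (ν : ℂ) (_ : ‖ν‖ < 1) =>
    g.maxGenEigenspace ν) μ⁻¹ habs)
  intro v hv
  obtain ⟨k, hk⟩ := (Module.End.mem_maxGenEigenspace f μ v).mp hv
  refine (Module.End.mem_maxGenEigenspace g μ⁻¹ v).mpr ⟨k, ?_⟩
  have hcomm : g * f = f * g := hgf.trans hfg.symm
  have hkey : g - μ⁻¹ • 1 = (-μ⁻¹) • (g * (f - μ • 1)) := by
    rw [mul_sub, hgf, mul_smul_comm, mul_one, smul_sub, smul_smul, neg_mul,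
      inv_mul_cancel₀ hμ0]
    module
  have hc2 : Commute g (f - μ • 1) := by
    unfold Commute SemiconjBy
    rw [mul_sub, sub_mul, hcomm, mul_smul_comm, smul_mul_assoc, mul_one, one_mul]
  rw [hkey, smul_pow, hc2.mul_pow]
  rw [LinearMap.smul_apply, Module.End.mul_apply, hk, map_zero, smul_zero]

/-- For a hyperbolic `B ∈ GL(p,ℤ)`, no nonzero integer vector lies in the stable subspace
`E₋` or in the unstable subspace `E₊` of `B` acting on `ℂ^p`; equivalently, both components
`m₋, m₊` of any `m ∈ ℤ^p \ {0}` in the decomposition `ℂ^p = E₋ ⊕ E₊` are nonzero. -/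
theorem integer_vector_not_in_stable_unstable
    (p : ℕ) (hp : 1 ≤ p)
    (B : Matrix (Fin p) (Fin p) ℤ) (hB : B.det = 1 ∨ B.det = -1)
    (hhyp : ∀ μ ∈ spectrum ℂ (B.map (Int.cast : ℤ → ℂ)), ‖μ‖ ≠ 1)
    (m : Fin p → ℤ) (hm : m ≠ 0) :
    (fun i => (m i : ℂ)) ∉ stableSubspace (Matrix.toLin' (B.map (Int.cast : ℤ → ℂ))) ∧
    (fun i => (m i : ℂ)) ∉ unstableSubspace (Matrix.toLin' (B.map (Int.cast : ℤ → ℂ))) := by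
  set A : Matrix (Fin p) (Fin p) ℤ := B.det • B.adjugate with hA
  have hdd : B.det * B.det = 1 := by rcases hB with h | h <;> rw [h] <;> norm_num
  have hAB : A * B = 1 := by
    rw [hA, Matrix.smul_mul, Matrix.adjugate_mul, smul_smul, hdd, one_smul]
  have hBA : B * A = 1 := by
    rw [hA, Matrix.mul_smul, Matrix.mul_adjugate, smul_smul, hdd, one_smul]
  constructor
  · exact fun h => key_lemma B A hAB m hm h
  · intro h
    refine key_lemma A B hBA m hm ?_
    refine unstable_le_stable_inv (Matrix.toLin' (B.map (Int.cast : ℤ → ℂ)))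
      (Matrix.toLin' (A.map (Int.cast : ℤ → ℂ))) ?_ ?_ h
    · have hmap : (B.map (Int.cast : ℤ → ℂ)) * (A.map (Int.cast : ℤ → ℂ)) = 1 := by
        rw [← map_int_mul, hBA]
        ext i j
        simp [Matrix.map_apply, Matrix.one_apply, apply_ite]
      rw [Module.End.mul_eq_comp, ← Matrix.toLin'_mul, hmap, Matrix.toLin'_one]
      rfl
    · have hmap : (A.map (Int.cast : ℤ → ℂ)) * (B.map (Int.cast : ℤ → ℂ)) = 1 := by
        rw [← map_int_mul, hAB]
        ext i j
        simp [Matrix.map_apply, Matrix.one_apply, apply_ite]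
      rw [Module.End.mul_eq_comp, ← Matrix.toLin'_mul, hmap, Matrix.toLin'_one]
      rfl
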